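/- Let f : R^d → R be a continuous function of compact support and suppose that for an infinite set Ξ ⊆ S^{d-1} of directions, the X-ray transform of f vanishes: ∫_{-∞}^{∞} f(x + τξ) dτ = 0 for all ξ ∈ Ξ and all x ∈ ξ^⊥. Then f ≡ 0. -/

import Mathlib

open MeasureTheory
open scoped ENNReal

lemma avoidHyperplanes {d : ℕ} (s : Set (Fin d → ℝ)) (hs : s.Finite)
    (h0 : ∀ a ∈ s, a ≠ 0) :
    ∃ v : Fin d → ℝ, ∀ a ∈ s, (∑ i, v i * a i) ≠ 0 := by
  by_contra hcon
  push_neg at hcon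
  have hcover : (Set.univ : Set (Fin d → ℝ)) ⊆ ⋃ a ∈ s, {v | (∑ i, v i * a i) = 0} := by
    intro v _
    obtain ⟨a, ha, hva⟩ := hcon v
    exact Set.mem_biUnion ha hva
  have hnull : volume (⋃ a ∈ s, {v : Fin d → ℝ | (∑ i, v i * a i) = 0}) = 0 := by
    rw [measure_biUnion_null_iff hs.countable]
    intro a ha
    set l : (Fin d → ℝ) →ₗ[ℝ] ℝ := ∑ i, a i • LinearMap.proj i with hl
    have hlv : ∀ v, l v = ∑ i, v i * a i := by
      intro v
      rw [hl]
      simp [LinearMap.sum_apply, mul_comm]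
    have hset : {v : Fin d → ℝ | (∑ i, v i * a i) = 0} = (LinearMap.ker l : Set (Fin d → ℝ)) := by
      ext v
      simp [LinearMap.mem_ker, hlv]
    rw [hset]
    apply Measure.addHaar_submodule
    intro htop
    have haa : l a = 0 := by
      have : a ∈ LinearMap.ker l := by rw [htop]; trivial
      simpa using this
    rw [hlv] at haa
    apply h0 a ha
    funext i
    have hnn : ∀ i ∈ Finset.univ, (0:ℝ) ≤ a i * a i := fun i _ => mul_self_nonneg _
    have := (Finset.sum_eq_zero_iff_of_nonneg hnn).mp haa i (Finset.mem_univ i)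
    simpa [mul_self_eq_zero] using this
  have hpos : volume (Set.univ : Set (Fin d → ℝ)) ≠ 0 :=
    ne_of_gt (isOpen_univ.measure_pos volume ⟨0, trivial⟩)
  exact hpos (measure_mono_null hcover hnull)

lemma pickNonparallel {d : ℕ} (Ξ : Set (Fin d → ℝ)) (hΞ_inf : Ξ.Infinite)
    (hΞ_sphere : ∀ ξ ∈ Ξ, ∑ i, (ξ i) ^ 2 = 1) (m : ℕ) :
    ∃ ξs : Fin m → (Fin d → ℝ), (∀ i, ξs i ∈ Ξ) ∧
      ∀ i j, i ≠ j → ∀ c : ℝ, ξs j ≠ c • ξs i := by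
  have hnz : ∀ x ∈ Ξ, x ≠ 0 := by
    intro x hx h0
    have := hΞ_sphere x hx
    rw [h0] at this
    simp at this
  have hpm : ∀ x ∈ Ξ, ∀ y ∈ Ξ, ∀ c : ℝ, y = c • x → y = x ∨ y = -x := by
    intro x hx y hy c hyc
    have hx1 := hΞ_sphere x hx
    have hy1 := hΞ_sphere y hy
    have hc : c * c = 1 := by
      have : ∑ i, (y i) ^ 2 = c ^ 2 * ∑ i, (x i) ^ 2 := by
        rw [Finset.mul_sum]
        refine Finset.sum_congr rfl fun i _ => ?_
        rw [hyc]
        simp [Pi.smul_apply, smul_eq_mul, mul_pow]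
      rw [hx1, hy1, mul_one] at this
      nlinarith [this]
    rcases mul_self_eq_one_iff.mp hc with h | h
    · left; rw [hyc, h, one_smul]
    · right; rw [hyc, h]; ext i; simp
  induction m with
  | zero => exact ⟨fun i => i.elim0, fun i => i.elim0, fun i => i.elim0⟩
  | succ m ih =>
    obtain ⟨ξs, hmem, hpar⟩ := ih
    have hbadfin : (⋃ i : Fin m, ({ξs i, -ξs i} : Set (Fin d → ℝ))).Finite :=
      Set.finite_iUnion fun i => (Set.finite_singleton _).insert _
    obtain ⟨ξnew, hmemnew⟩ := (hΞ_inf.diff hbadfin).nonempty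
    obtain ⟨hξΞ, hξbad⟩ := hmemnew
    have hnotpm : ∀ i : Fin m, ξnew ≠ ξs i ∧ ξnew ≠ -ξs i := by
      intro i
      constructor <;> intro h <;> exact hξbad (Set.mem_iUnion.mpr ⟨i, by simp [h]⟩)
    refine ⟨Fin.cons ξnew ξs, ?_, ?_⟩
    · intro i
      refine Fin.cases ?_ ?_ i
      · simpa using hξΞ
      · intro j; simpa using hmem j
    · intro i j
      refine Fin.cases ?_ (fun i' => ?_) i <;> refine Fin.cases ?_ (fun j' => ?_) j <;>
        simp only [Fin.cons_zero, Fin.cons_succ]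
      · intro hij; exact absurd rfl hij
      · intro _ c heq
        rcases hpm ξnew hξΞ (ξs j') (hmem j') c heq with h | h
        · exact (hnotpm j').1 h.symm
        · have : ξnew = -ξs j' := by rw [h]; simp
          exact (hnotpm j').2 this
      · intro _ c heq
        rcases hpm (ξs i') (hmem i') ξnew hξΞ c heq with h | h
        · exact (hnotpm i').1 h
        · exact (hnotpm i').2 h
      · intro hij c heq
        exact hpar i' j' (fun h => hij (congrArg Fin.succ h)) c heq

lemma stepA {d : ℕ} (f : (Fin d → ℝ) → ℝ) (hf_cont : Continuous f)
    (hf_supp : HasCompactSupport f)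
    (ξ : Fin d → ℝ) (hξ : ∑ i, (ξ i) ^ 2 = 1)
    (hint : ∀ x : Fin d → ℝ, (∑ i, x i * ξ i) = 0 → (∫ τ : ℝ, f (x + τ • ξ)) = 0)
    (g : (Fin d → ℝ) → ℝ) (hg : Continuous g)
    (hginv : ∀ (y : Fin d → ℝ) (τ : ℝ), g (y + τ • ξ) = g y) :
    ∫ y, f y * g y = 0 := by
  obtain _ | n := d
  · simp at hξ
  set F := EuclideanSpace ℝ (Fin (n + 1)) with hF
  let ξ' : F := WithLp.toLp 2 ξ
  have hξ' : ‖ξ'‖ = 1 := by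
    rw [EuclideanSpace.norm_eq]
    have : ∀ i, ‖ξ' i‖ ^ 2 = (ξ i) ^ 2 := fun i => by simp [ξ', sq_abs]
    simp only [this, hξ, Real.sqrt_one]
  obtain ⟨b, hb0⟩ : ∃ b : OrthonormalBasis (Fin (n + 1)) ℝ F, b 0 = ξ' := by
    have card : Module.finrank ℝ F = Fintype.card (Fin (n + 1)) := by simp [F]
    have horth : Orthonormal ℝ (Set.restrict {(0 : Fin (n + 1))} fun _ => ξ') := by
      constructor
      · intro i; exact hξ'
      · intro i j hij; exact absurd (Subsingleton.elim i j) hij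
    obtain ⟨b, hb⟩ := horth.exists_orthonormalBasis_extension_of_card_eq card
    exact ⟨b, hb 0 rfl⟩
  set h : (Fin (n + 1) → ℝ) → ℝ := fun y => f y * g y with hh
  have hh_cont : Continuous h := hf_cont.mul hg
  have hh_supp : HasCompactSupport h := hf_supp.mul_right
  set Θ : ℝ × (Fin n → ℝ) → F := fun p => b.repr.symm (WithLp.toLp 2 (Fin.cons p.1 p.2 : Fin (n + 1) → ℝ)) with hΘ
  have hcons_cont : Continuous fun p : ℝ × (Fin n → ℝ) => (Fin.cons p.1 p.2 : Fin (n + 1) → ℝ) := by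
    apply continuous_pi
    intro j
    refine Fin.cases ?_ ?_ j
    · simpa using (continuous_fst : Continuous fun p : ℝ × (Fin n → ℝ) => p.1)
    · intro i
      simpa [Function.comp_def] using ((continuous_apply i).comp
        (continuous_snd : Continuous fun p : ℝ × (Fin n → ℝ) => p.2))
  have hΘ_cont : Continuous Θ := (b.repr.symm.continuous).comp ((PiLp.continuous_toLp (p := 2) (β := fun _ : Fin (n + 1) => ℝ)).comp hcons_cont)
  set G : ℝ × (Fin n → ℝ) → ℝ := fun p => h (Θ p) with hG
  have hG_cont : Continuous G := hh_cont.comp ((PiLp.continuous_ofLp (p := 2) (β := fun _ : Fin (n + 1) => ℝ)).comp hΘ_cont)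
  have hG_supp : HasCompactSupport G := by
    set Θinv : (Fin (n + 1) → ℝ) → ℝ × (Fin n → ℝ) :=
      fun a => (b.repr (WithLp.toLp 2 a) 0, fun i => b.repr (WithLp.toLp 2 a) i.succ) with hΘinv
    have hΘinv_cont : Continuous Θinv := by
      refine Continuous.prodMk ?_ ?_
      · exact (continuous_apply _).comp ((PiLp.continuous_ofLp (p := 2) (β := fun _ : Fin (n + 1) => ℝ)).comp (b.repr.continuous.comp (PiLp.continuous_toLp (p := 2) (β := fun _ : Fin (n + 1) => ℝ))))
      · exact continuous_pi fun i => (continuous_apply _).comp ((PiLp.continuous_ofLp (p := 2) (β := fun _ : Fin (n + 1) => ℝ)).comp (b.repr.continuous.comp (PiLp.continuous_toLp (p := 2) (β := fun _ : Fin (n + 1) => ℝ))))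
    refine HasCompactSupport.intro (hh_supp.image hΘinv_cont) ?_
    intro p hp
    by_contra hGp
    apply hp
    refine ⟨(Θ p).ofLp, subset_tsupport _ (by simpa [hG] using hGp), ?_⟩
    have : b.repr (Θ p) = WithLp.toLp 2 (Fin.cons p.1 p.2 : Fin (n + 1) → ℝ) := by simp [hΘ]
    simp [hΘinv, this]
  have hG_int : Integrable G (volume.prod volume) := by
    rw [← Measure.volume_eq_prod]
    exact hG_cont.integrable_of_hasCompactSupport hG_supp
  -- chain of equalities
  have m1 : MeasurePreserving ((MeasurableEquiv.toLp 2 (Fin (n + 1) → ℝ)).symm) volume volume :=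
    EuclideanSpace.volume_preserving_symm_measurableEquiv_toLp _
  have A1 : (∫ y, h y) = ∫ z : F, h (((MeasurableEquiv.toLp 2 (Fin (n + 1) → ℝ)).symm) z) :=
    (m1.integral_comp (MeasurableEquiv.measurableEmbedding _) h).symm
  have m2 : MeasurePreserving (b.repr.symm : EuclideanSpace ℝ (Fin (n+1)) → F) volume volume :=
    b.measurePreserving_repr_symm
  have A2 : (∫ z : F, h (((MeasurableEquiv.toLp 2 (Fin (n + 1) → ℝ)).symm) z))
      = ∫ w : EuclideanSpace ℝ (Fin (n+1)),
          h (((MeasurableEquiv.toLp 2 (Fin (n + 1) → ℝ)).symm) (b.repr.symm w)) :=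
    (m2.integral_comp (b.repr.symm.toHomeomorph.measurableEmbedding)
      (fun z : F => h (((MeasurableEquiv.toLp 2 (Fin (n + 1) → ℝ)).symm) z))).symm
  have m3 : MeasurePreserving ((MeasurableEquiv.toLp 2 (Fin (n + 1) → ℝ)).symm).symm volume volume :=
    MeasurePreserving.symm _ m1
  have A3 : (∫ w : EuclideanSpace ℝ (Fin (n+1)),
        h (((MeasurableEquiv.toLp 2 (Fin (n + 1) → ℝ)).symm) (b.repr.symm w)))
      = ∫ a : Fin (n+1) → ℝ, h (((MeasurableEquiv.toLp 2 (Fin (n + 1) → ℝ)).symm)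
          (b.repr.symm (((MeasurableEquiv.toLp 2 (Fin (n + 1) → ℝ)).symm).symm a))) :=
    (m3.integral_comp (MeasurableEquiv.measurableEmbedding _) _).symm
  have m4 : MeasurePreserving
      ((MeasurableEquiv.piFinSuccAbove (fun _ : Fin (n+1) => ℝ) 0).symm) volume volume :=
    MeasurePreserving.symm _ (volume_preserving_piFinSuccAbove (fun _ : Fin (n+1) => ℝ) 0)
  have A4 : (∫ a : Fin (n+1) → ℝ, h (((MeasurableEquiv.toLp 2 (Fin (n + 1) → ℝ)).symm)
        (b.repr.symm (((MeasurableEquiv.toLp 2 (Fin (n + 1) → ℝ)).symm).symm a))))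
      = ∫ p : ℝ × (Fin n → ℝ), G p := by
    rw [← (m4.integral_comp (MeasurableEquiv.measurableEmbedding _)
      (fun a : Fin (n+1) → ℝ => h (((MeasurableEquiv.toLp 2 (Fin (n + 1) → ℝ)).symm)
        (b.repr.symm (((MeasurableEquiv.toLp 2 (Fin (n + 1) → ℝ)).symm).symm a)))))]
    refine integral_congr_ae (Filter.Eventually.of_forall fun p => ?_)
    have hconsEq : ((MeasurableEquiv.piFinSuccAbove (fun _ : Fin (n+1) => ℝ) 0).symm p)
        = (Fin.cons p.1 p.2 : Fin (n+1) → ℝ) := by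
      simp [MeasurableEquiv.piFinSuccAbove, Fin.insertNthEquiv, Fin.insertNth_zero]
    show h _ = G p
    rw [hconsEq]
    rfl
  have A5 : (∫ p : ℝ × (Fin n → ℝ), G p)
      = ∫ y : Fin n → ℝ, ∫ τ : ℝ, G (τ, y) := by
    rw [Measure.volume_eq_prod, MeasureTheory.integral_prod _ hG_int]
    exact integral_integral_swap hG_int
  -- the inner integral vanishes
  have A6 : ∀ y : Fin n → ℝ, (∫ τ : ℝ, G (τ, y)) = 0 := by
    intro y
    let xF : F := ∑ i : Fin n, y i • b i.succ
    let xp : Fin (n + 1) → ℝ := WithLp.ofLp xF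
    have keyF : ∀ τ : ℝ, Θ (τ, y) = xF + τ • ξ' := by
      intro τ
      have : Θ (τ, y) = ∑ i : Fin (n+1), (Fin.cons τ y : Fin (n+1) → ℝ) i • b i := by
        rw [hΘ]; exact (b.sum_repr_symm _).symm
      rw [this, Fin.sum_univ_succ]
      simp [hb0, add_comm, xF]
    have key : ∀ τ : ℝ, (Θ (τ, y)).ofLp = xp + τ • ξ := fun τ => by rw [keyF τ]; rfl
    have perp : (∑ i, xp i * ξ i) = 0 := by
      have h1 : (∑ i, xp i * ξ i) = (inner ℝ xF ξ' : ℝ) := by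
        rw [PiLp.inner_apply]; simp [RCLike.inner_apply, xp, ξ', mul_comm]
      rw [h1, ← hb0]
      rw [sum_inner]
      refine Finset.sum_eq_zero fun i _ => ?_
      rw [real_inner_smul_left, b.orthonormal.2 (Fin.succ_ne_zero i), mul_zero]
    calc (∫ τ : ℝ, G (τ, y)) = ∫ τ : ℝ, f (xp + τ • ξ) * g xp := by
          refine integral_congr_ae (Filter.Eventually.of_forall fun τ => ?_)
          show h (Θ (τ, y)).ofLp = _
          rw [key τ]
          show f (xp + τ • ξ) * g (xp + τ • ξ) = _
          rw [hginv]
      _ = (∫ τ : ℝ, f (xp + τ • ξ)) * g xp := integral_mul_const _ _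
      _ = 0 := by rw [hint xp perp, zero_mul]
  calc (∫ y, f y * g y) = ∫ y, h y := rfl
    _ = 0 := by
        rw [A1, A2, A3, A4, A5]
        simp only [A6]
        simp

lemma stepB {d : ℕ} (f : (Fin d → ℝ) → ℝ) (hf_cont : Continuous f)
    (hf_supp : HasCompactSupport f)
    (Ξ : Set (Fin d → ℝ)) (hΞ_inf : Ξ.Infinite)
    (hΞ_sphere : ∀ ξ ∈ Ξ, ∑ i, (ξ i) ^ 2 = 1)
    (hvanish : ∀ ξ ∈ Ξ, ∀ x : Fin d → ℝ, (∑ i, x i * ξ i) = 0 →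
      (∫ τ : ℝ, f (x + τ • ξ)) = 0)
    (k : ℕ) (η : Fin d → ℝ) :
    (∫ y, f y * (∑ i, y i * η i) ^ k) = 0 := by
  classical
  -- a convenient instance of stepA
  have stepA' : ∀ ξ ∈ Ξ, ∀ η' : Fin d → ℝ, (∑ i, η' i * ξ i) = 0 →
      (∫ y, f y * (∑ i, y i * η' i) ^ k) = 0 := by
    intro ξ hξΞ η' hperp
    refine stepA f hf_cont hf_supp ξ (hΞ_sphere ξ hξΞ) (hvanish ξ hξΞ) _ ?_ ?_
    · exact (continuous_finset_sum _ fun i _ => (continuous_apply i).mul continuous_const).pow k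
    · intro y τ
      congr 1
      have : ∀ i, (y + τ • ξ) i * η' i = y i * η' i + τ * (η' i * ξ i) := by
        intro i; simp [Pi.add_apply, Pi.smul_apply, smul_eq_mul]; ring
      rw [Finset.sum_congr rfl fun i _ => this i, Finset.sum_add_distrib, ← Finset.mul_sum,
        hperp, mul_zero, add_zero]
  by_cases hcase : ∃ ξ ∈ Ξ, (∑ i, η i * ξ i) = 0
  · obtain ⟨ξ, hξΞ, hperp⟩ := hcase
    exact stepA' ξ hξΞ η hperp
  · push_neg at hcase
    obtain ⟨ξs, hmem, hpar⟩ := pickNonparallel Ξ hΞ_inf hΞ_sphere (k + 1)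
    have hξunit : ∀ i, ∑ l, (ξs i l) ^ 2 = 1 := fun i => hΞ_sphere _ (hmem i)
    have hξnz : ∀ i, ξs i ≠ 0 := by
      intro i h0
      have := hξunit i
      rw [h0] at this; simp at this
    set dη : Fin (k+1) → ℝ := fun i => ∑ l, η l * ξs i l with hdη
    have hdηnz : ∀ i, dη i ≠ 0 := fun i => hcase (ξs i) (hmem i)
    set w : Fin (k+1) → Fin (k+1) → (Fin d → ℝ) :=
      fun i j => dη i • ξs j - dη j • ξs i with hw
    set S : Set (Fin d → ℝ) :=
      Set.range ξs ∪ ⋃ (i) (j) (_ : i ≠ j), {w i j} with hS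
    have hSfin : S.Finite := by
      apply Set.Finite.union (Set.finite_range _)
      exact Set.finite_iUnion fun i => Set.finite_iUnion fun j =>
        Set.finite_iUnion fun _ => Set.finite_singleton _
    have hSnz : ∀ a ∈ S, a ≠ 0 := by
      rintro a (⟨i, rfl⟩ | ha)
      · exact hξnz i
      · simp only [Set.mem_iUnion, Set.mem_singleton_iff] at ha
        obtain ⟨i, j, hij, rfl⟩ := ha
        intro h0
        have : ξs j = (dη j / dη i) • ξs i := by
          have := sub_eq_zero.mp h0
          funext l
          have hl := congrFun this l
          simp only [Pi.smul_apply, smul_eq_mul] at hl ⊢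
          rw [div_mul_eq_mul_div, eq_div_iff (hdηnz i)]
          linear_combination hl
        exact hpar i j hij _ this
    obtain ⟨v, hv⟩ := avoidHyperplanes S hSfin hSnz
    set dv : Fin (k+1) → ℝ := fun i => ∑ l, v l * ξs i l with hdv
    have hdvnz : ∀ i, dv i ≠ 0 := fun i => hv (ξs i) (Or.inl ⟨i, rfl⟩)
    set t : Fin (k+1) → ℝ := fun i => -(dη i) / dv i with ht
    have htinj : Function.Injective t := by
      intro i j hij
      by_contra hne
      have hwmem : w i j ∈ S := Or.inr (by
        simp only [Set.mem_iUnion, Set.mem_singleton_iff]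
        exact ⟨i, j, hne, rfl⟩)
      apply hv (w i j) hwmem
      have hcross : dη i * dv j = dη j * dv i := by
        have h2 := hij
        rw [ht] at h2
        simp only at h2
        rw [div_eq_div_iff (hdvnz i) (hdvnz j)] at h2
        linear_combination -h2
      have : (∑ l, v l * w i j l) = dη i * dv j - dη j * dv i := by
        rw [hw]
        simp only [Pi.sub_apply, Pi.smul_apply, smul_eq_mul]
        rw [Finset.sum_congr rfl (fun l _ => by ring :
          ∀ l ∈ Finset.univ, v l * (dη i * ξs j l - dη j * ξs i l)
            = dη i * (v l * ξs j l) - dη j * (v l * ξs i l)),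
          Finset.sum_sub_distrib, ← Finset.mul_sum, ← Finset.mul_sum]
      rw [this, hcross, sub_self]
    -- the one-variable polynomial
    set a : (Fin d → ℝ) → ℝ := fun y => ∑ l, y l * η l with ha
    set bb : (Fin d → ℝ) → ℝ := fun y => ∑ l, y l * v l with hbb
    have hacont : Continuous a :=
      continuous_finset_sum _ fun i _ => (continuous_apply i).mul continuous_const
    have hbcont : Continuous bb :=
      continuous_finset_sum _ fun i _ => (continuous_apply i).mul continuous_const
    have hint : ∀ g : (Fin d → ℝ) → ℝ, Continuous g →
        Integrable (fun y => f y * g y) volume := fun g hg =>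
      (hf_cont.mul hg).integrable_of_hasCompactSupport hf_supp.mul_right
    set c : ℕ → ℝ := fun j => (k.choose j : ℝ) * ∫ y, f y * (a y ^ j * bb y ^ (k - j)) with hc
    set P : Polynomial ℝ :=
      ∑ j ∈ Finset.range (k+1), Polynomial.C (c j) * Polynomial.X ^ (k - j) with hP
    have heval : ∀ s : ℝ, P.eval s = ∫ y, f y * (∑ l, y l * (η + s • v) l) ^ k := by
      intro s
      have hsum : ∀ y : Fin d → ℝ, (∑ l, y l * (η + s • v) l) = a y + s * bb y := by
        intro y
        rw [ha, hbb, Finset.mul_sum, ← Finset.sum_add_distrib]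
        refine Finset.sum_congr rfl fun l _ => ?_
        simp [Pi.add_apply, Pi.smul_apply, smul_eq_mul]; ring
      have hexp : ∀ y : Fin d → ℝ, f y * (∑ l, y l * (η + s • v) l) ^ k
          = ∑ j ∈ Finset.range (k+1),
              (s ^ (k - j) * (k.choose j : ℝ)) * (f y * (a y ^ j * bb y ^ (k - j))) := by
        intro y
        rw [hsum, add_pow, Finset.mul_sum]
        refine Finset.sum_congr rfl fun j _ => ?_
        rw [mul_pow]
        ring
      rw [MeasureTheory.integral_congr_ae (Filter.Eventually.of_forall hexp),
        integral_finset_sum _ (fun j _ => ((hint (fun y => a y ^ j * bb y ^ (k - j)) ((hacont.pow j).mul (hbcont.pow (k - j)))).const_mul (s ^ (k - j) * (k.choose j : ℝ))))]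
      rw [hP, Polynomial.eval_finset_sum]
      refine Finset.sum_congr rfl fun j _ => ?_
      rw [integral_const_mul, Polynomial.eval_mul, Polynomial.eval_C, Polynomial.eval_pow,
        Polynomial.eval_X, hc]
      ring
    have hroots : ∀ i : Fin (k+1), P.eval (t i) = 0 := by
      intro i
      rw [heval]
      apply stepA' (ξs i) (hmem i)
      have : ∀ l, (η + t i • v) l * ξs i l = η l * ξs i l + t i * (v l * ξs i l) := by
        intro l; simp [Pi.add_apply, Pi.smul_apply, smul_eq_mul]; ring
      rw [Finset.sum_congr rfl fun l _ => this l, Finset.sum_add_distrib, ← Finset.mul_sum]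
      show dη i + t i * dv i = 0
      rw [ht]
      simp only
      rw [div_mul_eq_mul_div, mul_div_assoc, div_self (hdvnz i), mul_one, add_neg_cancel]
    have hdeg : P.natDegree < Fintype.card (Fin (k+1)) := by
      have : P.natDegree ≤ k := by
        rw [hP]
        refine Polynomial.natDegree_sum_le_of_forall_le _ _ fun j hj => ?_
        refine le_trans (Polynomial.natDegree_C_mul_le _ _) ?_
        simpa using Nat.sub_le k j
      simpa using Nat.lt_succ_of_le this
    have hP0 : P = 0 :=
      Polynomial.eq_zero_of_natDegree_lt_card_of_eval_eq_zero P htinj hroots hdeg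
    have h0 := heval 0
    rw [hP0, Polynomial.eval_zero] at h0
    rw [show (η + (0:ℝ) • v) = η from by simp] at h0
    exact h0.symm

lemma stepC {d : ℕ} (f : (Fin d → ℝ) → ℝ) (hf_cont : Continuous f)
    (hf_supp : HasCompactSupport f)
    (hmom : ∀ (k : ℕ) (η : Fin d → ℝ), (∫ y, f y * (∑ i, y i * η i) ^ k) = 0)
    (η : Fin d → ℝ) :
    (∫ y, f y * Real.exp (∑ i, y i * η i)) = 0 := by
  set a : (Fin d → ℝ) → ℝ := fun y => ∑ i, y i * η i with ha
  have hacont : Continuous a :=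
    continuous_finset_sum _ fun i _ => (continuous_apply i).mul continuous_const
  set S : ℕ → (Fin d → ℝ) → ℝ :=
    fun K y => ∑ k ∈ Finset.range K, f y * (a y ^ k / (k.factorial : ℝ)) with hSdef
  have hint : ∀ g : (Fin d → ℝ) → ℝ, Continuous g →
      Integrable (fun y => f y * g y) volume := fun g hg =>
    (hf_cont.mul hg).integrable_of_hasCompactSupport hf_supp.mul_right
  have hSint0 : ∀ K, (∫ y, S K y) = 0 := by
    intro K
    rw [hSdef]
    rw [integral_finset_sum _ (fun k _ => hint (fun y => a y ^ k / (k.factorial : ℝ)) ((hacont.pow k).div_const (k.factorial : ℝ)))]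
    refine Finset.sum_eq_zero fun k _ => ?_
    have : (fun y => f y * (a y ^ k / (k.factorial : ℝ)))
        = fun y => (f y * a y ^ k) / (k.factorial : ℝ) := by
      funext y; ring
    rw [this, integral_div, hmom k η, zero_div]
  -- dominated convergence
  have hbound_cont : Continuous fun y => |f y| * Real.exp |a y| :=
    hf_cont.abs.mul (Real.continuous_exp.comp hacont.abs)
  have hbound_int : Integrable (fun y => |f y| * Real.exp |a y|) volume :=
    hbound_cont.integrable_of_hasCompactSupport (hf_supp.abs.mul_right)
  have hmeas : ∀ K, AEStronglyMeasurable (S K) volume := by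
    intro K
    refine Continuous.aestronglyMeasurable ?_
    refine continuous_finset_sum _ fun k _ => hf_cont.mul ((hacont.pow k).div_const _)
  have hb : ∀ K, ∀ᵐ y : (Fin d → ℝ), ‖S K y‖ ≤ |f y| * Real.exp |a y| := by
    intro K
    refine Filter.Eventually.of_forall fun y => ?_
    rw [hSdef]
    calc ‖∑ k ∈ Finset.range K, f y * (a y ^ k / (k.factorial : ℝ))‖
        ≤ ∑ k ∈ Finset.range K, ‖f y * (a y ^ k / (k.factorial : ℝ))‖ :=
          norm_sum_le _ _
      _ = ∑ k ∈ Finset.range K, |f y| * (|a y| ^ k / (k.factorial : ℝ)) := by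
          refine Finset.sum_congr rfl fun k _ => ?_
          rw [Real.norm_eq_abs, abs_mul, abs_div, abs_pow]
          simp [Nat.abs_cast]
      _ = |f y| * ∑ k ∈ Finset.range K, |a y| ^ k / (k.factorial : ℝ) := by
          rw [Finset.mul_sum]
      _ ≤ |f y| * Real.exp |a y| := by
          refine mul_le_mul_of_nonneg_left ?_ (abs_nonneg _)
          exact Real.sum_le_exp_of_nonneg (abs_nonneg _) K
  have hlim : ∀ᵐ y : (Fin d → ℝ), Filter.Tendsto (fun K => S K y) Filter.atTop
      (nhds (f y * Real.exp (a y))) := by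
    refine Filter.Eventually.of_forall fun y => ?_
    have hs : HasSum (fun k : ℕ => a y ^ k / (k.factorial : ℝ)) (Real.exp (a y)) :=
      Real.exp_eq_exp_ℝ ▸ NormedSpace.expSeries_div_hasSum_exp (a y)
    have := (hs.mul_left (f y)).tendsto_sum_nat
    exact this
  have := MeasureTheory.tendsto_integral_of_dominated_convergence _ hmeas hbound_int hb hlim
  have h0 : Filter.Tendsto (fun K => ∫ y, S K y) Filter.atTop (nhds 0) := by
    simp only [hSint0]
    exact tendsto_const_nhds
  exact tendsto_nhds_unique this h0

theorem stmt9 {d : ℕ} (f : (Fin d → ℝ) → ℝ) (hf_cont : Continuous f)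
    (hf_supp : HasCompactSupport f)
    (Ξ : Set (Fin d → ℝ)) (hΞ_inf : Ξ.Infinite)
    (hΞ_sphere : ∀ ξ ∈ Ξ, ∑ i, (ξ i) ^ 2 = 1)
    (hvanish : ∀ ξ ∈ Ξ, ∀ x : Fin d → ℝ, (∑ i, x i * ξ i) = 0 →
      (∫ τ : ℝ, f (x + τ • ξ)) = 0) :
    f = 0 := by
  have expmom : ∀ η : Fin d → ℝ, (∫ y, f y * Real.exp (∑ i, y i * η i)) = 0 :=
    stepC f hf_cont hf_supp
      (fun k η => stepB f hf_cont hf_supp Ξ hΞ_inf hΞ_sphere hvanish k η)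
  have hint : ∀ g : (Fin d → ℝ) → ℝ, Continuous g →
      Integrable (fun y => f y * g y) volume := fun g hg =>
    (hf_cont.mul hg).integrable_of_hasCompactSupport hf_supp.mul_right
  set expF : (Fin d → ℝ) → (Fin d → ℝ) → ℝ :=
    fun η y => Real.exp (∑ i, y i * η i) with hexpF
  have hexpcont : ∀ η, Continuous (expF η) := fun η =>
    Real.continuous_exp.comp (continuous_finset_sum _ fun i _ =>
      (continuous_apply i).mul continuous_const)
  set expSet : Set ((Fin d → ℝ) → ℝ) := Set.range expF with hexpSet
  have hmulclosed : ∀ g1 ∈ expSet, ∀ g2 ∈ expSet, g1 * g2 ∈ expSet := by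
    rintro _ ⟨η₁, rfl⟩ _ ⟨η₂, rfl⟩
    refine ⟨η₁ + η₂, ?_⟩
    funext y
    simp only [hexpF, Pi.mul_apply, ← Real.exp_add]
    congr 1
    rw [← Finset.sum_add_distrib]
    exact Finset.sum_congr rfl fun i _ => by simp [mul_add]
  -- properties on the span
  have spanP : ∀ g ∈ Submodule.span ℝ expSet, Continuous g ∧ (∫ y, f y * g y) = 0 := by
    intro g hg
    induction hg using Submodule.span_induction with
    | mem x hx =>
      obtain ⟨η, rfl⟩ := hx
      exact ⟨hexpcont η, expmom η⟩
    | zero =>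
      refine ⟨continuous_const, ?_⟩
      simp
    | add x y hx hy ihx ihy =>
      refine ⟨ihx.1.add ihy.1, ?_⟩
      have : (fun z => f z * (x + y) z) = fun z => f z * x z + f z * y z := by
        funext z; simp [Pi.add_apply]; ring
      rw [this, integral_add (hint x ihx.1) (hint y ihy.1), ihx.2, ihy.2, add_zero]
    | smul c x hx ihx =>
      refine ⟨ihx.1.const_smul c, ?_⟩
      have : (fun z => f z * (c • x) z) = fun z => c * (f z * x z) := by
        funext z; simp [Pi.smul_apply, smul_eq_mul]; ring
      rw [this, integral_const_mul, ihx.2, mul_zero]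
  have hspan_mul : ∀ g1 ∈ Submodule.span ℝ expSet, ∀ g2 ∈ Submodule.span ℝ expSet,
      g1 * g2 ∈ Submodule.span ℝ expSet := by
    intro g1 hg1 g2 hg2
    have hmm := Submodule.mul_mem_mul hg1 hg2
    rw [Submodule.span_mul_span] at hmm
    refine Submodule.span_mono ?_ hmm
    rintro _ ⟨x, hx, y, hy, rfl⟩
    exact hmulclosed x hx y hy
  -- Stone-Weierstrass setup
  set K : Set (Fin d → ℝ) := tsupport f with hK
  have hKcompact : IsCompact K := hf_supp
  haveI : CompactSpace K := isCompact_iff_compactSpace.mp hKcompact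
  set A : Subalgebra ℝ C(K, ℝ) := Algebra.adjoin ℝ
    (Set.range fun η : Fin d → ℝ =>
      (⟨fun y => expF η y, (hexpcont η).comp continuous_subtype_val⟩ : C(K, ℝ))) with hA
  have hsep : A.SeparatesPoints := by
    intro x y hxy
    refine ⟨(⟨fun z => expF ((x : Fin d → ℝ) - (y : Fin d → ℝ)) z,
      (hexpcont _).comp continuous_subtype_val⟩ : C(K, ℝ)), ?_, ?_⟩
    · exact ⟨_, Algebra.subset_adjoin ⟨(x : Fin d → ℝ) - (y : Fin d → ℝ), rfl⟩, rfl⟩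
    · simp only [ContinuousMap.coe_mk, hexpF]
      intro heq
      have := Real.exp_injective heq
      have hzero : ∑ i, ((x : Fin d → ℝ) i - (y : Fin d → ℝ) i) ^ 2 = 0 := by
        have h2 : (∑ i, (x : Fin d → ℝ) i * ((x : Fin d → ℝ) - (y : Fin d → ℝ)) i)
            - (∑ i, (y : Fin d → ℝ) i * ((x : Fin d → ℝ) - (y : Fin d → ℝ)) i) = 0 := by
          rw [this]; ring
        rw [← Finset.sum_sub_distrib] at h2
        rw [← h2]
        exact Finset.sum_congr rfl fun i _ => by simp [Pi.sub_apply]; ring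
      apply hxy
      have : ∀ i, (x : Fin d → ℝ) i = (y : Fin d → ℝ) i := by
        intro i
        have hnn : ∀ j ∈ Finset.univ, (0:ℝ) ≤ ((x : Fin d → ℝ) j - (y : Fin d → ℝ) j) ^ 2 :=
          fun j _ => sq_nonneg _
        have := (Finset.sum_eq_zero_iff_of_nonneg hnn).mp hzero i (Finset.mem_univ i)
        have := sq_eq_zero_iff.mp this
        linarith
      exact Subtype.ext (funext this)
  -- global representation of elements of A
  have hglobal : ∀ g ∈ A, ∃ G : (Fin d → ℝ) → ℝ,
      G ∈ Submodule.span ℝ expSet ∧ ∀ y : K, G y = g y := by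
    intro g hg
    induction hg using Algebra.adjoin_induction with
    | mem x hx =>
      obtain ⟨η, rfl⟩ := hx
      exact ⟨expF η, Submodule.subset_span ⟨η, rfl⟩, fun y => rfl⟩
    | algebraMap r =>
      refine ⟨fun _ => r, ?_, fun y => ?_⟩
      · have : (fun _ : Fin d → ℝ => r) = r • expF 0 := by
          funext y
          simp [hexpF, Pi.smul_apply, smul_eq_mul]
        rw [this]
        exact Submodule.smul_mem _ _ (Submodule.subset_span ⟨0, rfl⟩)
      · rfl
    | add x y hx hy ihx ihy =>
      obtain ⟨G1, hG1, hG1v⟩ := ihx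
      obtain ⟨G2, hG2, hG2v⟩ := ihy
      exact ⟨G1 + G2, Submodule.add_mem _ hG1 hG2,
        fun z => by simp [Pi.add_apply, hG1v z, hG2v z]⟩
    | mul x y hx hy ihx ihy =>
      obtain ⟨G1, hG1, hG1v⟩ := ihx
      obtain ⟨G2, hG2, hG2v⟩ := ihy
      exact ⟨G1 * G2, hspan_mul _ hG1 _ hG2,
        fun z => by simp [Pi.mul_apply, hG1v z, hG2v z]⟩
  -- integral of f^2 is zero
  have hintf2 : Integrable (fun y => f y * f y) volume := hint f hf_cont
  have hintabs : Integrable (fun y => |f y|) volume :=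
    hf_cont.abs.integrable_of_hasCompactSupport hf_supp.abs
  have key : ∀ ε : ℝ, 0 < ε → (∫ y, f y * f y) ≤ ε * ∫ y, |f y| := by
    intro ε hε
    obtain ⟨g, hgbound⟩ := ContinuousMap.exists_mem_subalgebra_near_continuous_of_separatesPoints
      A hsep (fun y : K => f y) (hf_cont.comp continuous_subtype_val) ε hε
    obtain ⟨G, hGspan, hGval⟩ := hglobal (g : C(K, ℝ)) g.2
    obtain ⟨hGcont, hGint0⟩ := spanP G hGspan
    have step1 : (∫ y, f y * f y) = ∫ y, f y * (f y - G y) := by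
      have : (fun y => f y * (f y - G y)) = fun y => f y * f y - f y * G y := by
        funext y; ring
      rw [this, integral_sub hintf2 (hint G hGcont), hGint0, sub_zero]
    rw [step1]
    have step2 : ∀ y, f y * (f y - G y) ≤ |f y| * ε := by
      intro y
      by_cases hy : y ∈ K
      · calc f y * (f y - G y) ≤ |f y * (f y - G y)| := le_abs_self _
          _ = |f y| * |f y - G y| := abs_mul _ _
          _ ≤ |f y| * ε := by
            refine mul_le_mul_of_nonneg_left ?_ (abs_nonneg _)
            have := hgbound ⟨y, hy⟩
            rw [Real.norm_eq_abs] at this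
            rw [← hGval ⟨y, hy⟩] at this
            rw [abs_sub_comm]
            exact le_of_lt this
      · have : f y = 0 := image_eq_zero_of_notMem_tsupport hy
        rw [this]
        simp [abs_nonneg]
    calc (∫ y, f y * (f y - G y)) ≤ ∫ y, |f y| * ε := by
          refine integral_mono (hint _ (hf_cont.sub hGcont)) ?_ step2
          exact hintabs.mul_const ε
      _ = ε * ∫ y, |f y| := by rw [integral_mul_const, mul_comm]
  have hC : (0:ℝ) ≤ ∫ y, |f y| := integral_nonneg fun y => abs_nonneg _
  have hI_nonneg : (0:ℝ) ≤ ∫ y, f y * f y := integral_nonneg fun y => mul_self_nonneg _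
  have hI0 : (∫ y, f y * f y) = 0 := by
    by_contra hne
    have hpos : (0:ℝ) < ∫ y, f y * f y := lt_of_le_of_ne hI_nonneg (Ne.symm hne)
    set I := ∫ y, f y * f y with hI
    set C := ∫ y, |f y| with hCdef
    have := key (I / (2 * (C + 1))) (by positivity)
    have hlt : I / (2 * (C + 1)) * C < I := by
      rw [div_mul_eq_mul_div, div_lt_iff₀ (by positivity)]
      nlinarith
    linarith
  -- conclude
  have hae : (fun y => f y * f y) =ᵐ[volume] 0 :=
    (integral_eq_zero_iff_of_nonneg (fun y => mul_self_nonneg _) hintf2).mp hI0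
  have heq : (fun y => f y * f y) = (0 : (Fin d → ℝ) → ℝ) :=
    (Continuous.ae_eq_iff_eq volume (hf_cont.mul hf_cont) continuous_const).mp hae
  funext y
  have := congrFun heq y
  simpa [mul_self_eq_zero] using this
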